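/- For a connected threshold graph G = (0^{a_1} 1^{a_2} 0^{a_3} ... 0^{a_{n-1}} 1^{a_n}) with all a_i positive integers, the multiplicity of -2 as an eigenvalue of the distance matrix of G is at least the sum over i of (a_{2i-1} - 1), where the sum runs over all odd-indexed blocks. -/

import Mathlib

/-- Build the creation sequence of a threshold graph from block sizes,
starting with the given bit and alternating. -/
def blockSeq : List ℕ → Bool → List Bool
  | [], _ => []
  | a :: rest, bit => List.replicate a bit ++ blockSeq rest (!bit)

/-- The threshold graph of a creation sequence `c`: vertex `i` is adjacent to `j`
iff they are distinct and the later of the two was added as a dominating vertex. -/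
def thresholdGraph (c : List Bool) : SimpleGraph (Fin c.length) where
  Adj i j := i ≠ j ∧ c.get (max i j) = true
  symm := by
    constructor
    intro i j h
    exact ⟨h.1.symm, by rw [max_comm]; exact h.2⟩
  loopless := by
    constructor
    intro i h
    exact h.1 rfl

/-- The distance matrix of a graph, with real entries. -/
noncomputable def distMatrix {V : Type*} [Fintype V] (G : SimpleGraph V) : Matrix V V ℝ :=
  fun i j => (G.dist i j : ℝ)


open Polynomial Matrix


theorem my_sumExtend_inl {K V ι : Type*} [Field K] [AddCommGroup V] [Module K V]
    (v : ι → V) (h : LinearIndependent K v) (i : ι) : Module.Basis.sumExtend h (Sum.inl i) = v i := by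
  rw [Module.Basis.sumExtend, Module.Basis.reindex_apply]
  erw [Equiv.symm_symm, Module.Basis.extend_apply_self]
  erw [Equiv.trans_apply, Equiv.sumCongr_apply, Sum.map_inl, Equiv.Set.sumDiffSubset_apply_inl]
  simp

theorem card_le_rootMultiplicity {n : Type*} [Fintype n] [DecidableEq n]
    (A : Matrix n n ℝ) (μ : ℝ) {ι : Type*} [Fintype ι] (v : ι → n → ℝ)
    (hli : LinearIndependent ℝ v) (hev : ∀ i, A.mulVec (v i) = μ • v i) :
    Fintype.card ι ≤ (A.charpoly).rootMultiplicity μ := by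
  classical
  set b := Module.Basis.sumExtend hli with hb
  haveI : Fintype (Module.Basis.sumExtendIndex hli) :=
    @Fintype.ofInjective _ _ (FiniteDimensional.fintypeBasisIndex b) Sum.inr Sum.inr_injective
  set f := Matrix.mulVecLin A with hf
  set M := LinearMap.toMatrix b b f with hM
  have hchar : A.charpoly = M.charpoly := by
    rw [hM, LinearMap.charpoly_toMatrix, hf, ← Matrix.toLin'_apply',
      ← LinearMap.charpoly_toMatrix (Matrix.toLin' A) (Pi.basisFun ℝ n),
      LinearMap.toMatrix_eq_toMatrix', LinearMap.toMatrix'_toLin']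
  have hcol : ∀ (r : _) (i : ι), M r (Sum.inl i) = if r = Sum.inl i then μ else 0 := by
    intro r i
    rw [hM, LinearMap.toMatrix_apply, my_sumExtend_inl v hli i]
    have h2 : f (v i) = μ • b (Sum.inl i) := by
      rw [hf, Matrix.mulVecLin_apply, hev i, my_sumExtend_inl v hli i]
    rw [h2, _root_.map_smul, Module.Basis.repr_self]
    simp [Finsupp.single_apply, eq_comm]
  have h21 : M.toBlocks₂₁ = 0 := by
    ext r c; simp [Matrix.toBlocks₂₁, hcol]
  have h11 : M.toBlocks₁₁ = μ • (1 : Matrix ι ι ℝ) := by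
    ext r c
    simp [Matrix.toBlocks₁₁, hcol, Matrix.one_apply, eq_comm]
  have hMeq : M = Matrix.fromBlocks (μ • (1 : Matrix ι ι ℝ)) M.toBlocks₁₂ 0 M.toBlocks₂₂ := by
    rw [← h11, ← h21, Matrix.fromBlocks_toBlocks]
  have hpow : (μ • (1 : Matrix ι ι ℝ)).charpoly = (X - C μ) ^ Fintype.card ι := by
    rw [Matrix.smul_one_eq_diagonal]
    unfold Matrix.charpoly
    have hcm : charmatrix (Matrix.diagonal (fun _ : ι => μ)) =
        Matrix.diagonal (fun _ : ι => (X : ℝ[X]) - C μ) := by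
      ext r c
      by_cases h : r = c <;> simp [charmatrix_apply, Matrix.diagonal_apply, h]
    rw [hcm, Matrix.det_diagonal]
    simp [Finset.prod_const, Finset.card_univ]
  have hdvd : (X - C μ) ^ Fintype.card ι ∣ A.charpoly := by
    rw [hchar, hMeq, Matrix.charpoly_fromBlocks_zero₂₁, hpow]
    exact Dvd.intro _ rfl
  rw [← Polynomial.le_rootMultiplicity_iff (A.charpoly_monic.ne_zero)] at hdvd
  exact hdvd

theorem blockSeq_length (l : List ℕ) (b : Bool) : (blockSeq l b).length = l.sum := by
  induction l generalizing b with
  | nil => rfl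
  | cons a rest ih => simp [blockSeq, ih]

theorem blockSeq_getElem (l : List ℕ) (b : Bool) (j k : ℕ) (hj : j < l.length)
    (hk : k < l[j]) (h : (l.take j).sum + k < (blockSeq l b).length) :
    (blockSeq l b)[(l.take j).sum + k] = if j % 2 = 0 then b else !b := by
  induction j generalizing l b with
  | zero =>
    cases l with
    | nil => simp at hj
    | cons a rest =>
      simp only [List.take_zero, List.sum_nil, Nat.zero_add]
      have hk' : k < a := by simpa using hk
      show (List.replicate a b ++ blockSeq rest (!b))[k]'(by simpa [blockSeq] using h) = _
      rw [List.getElem_append_left (show k < (List.replicate a b).length by simpa using hk')]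
      simp
  | succ j ih =>
    cases l with
    | nil => simp at hj
    | cons a rest =>
      have hj' : j < rest.length := by simpa using hj
      have hk' : k < rest[j]'hj' := by simpa using hk
      have hsum : ((a :: rest).take (j+1)).sum = a + (rest.take j).sum := by simp
      have hlen : (rest.take j).sum + k < (blockSeq rest (!b)).length := by
        rw [blockSeq_length] at h ⊢
        simp at h
        omega
      show (List.replicate a b ++ blockSeq rest (!b))[((a :: rest).take (j+1)).sum + k]'(by simpa [blockSeq] using h) = _
      have harith : ((a :: rest).take (j+1)).sum + k = a + ((rest.take j).sum + k) := by
        rw [hsum]; ring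
      rw [List.getElem_append_right (show (List.replicate a b).length ≤ ((a :: rest).take (j+1)).sum + k by rw [harith]; simp)]
      have hstep : ∀ (hh : _), (blockSeq rest (!b))[((a :: rest).take (j+1)).sum + k
          - (List.replicate a b).length]'hh = if j % 2 = 0 then !b else b := by
        intro hh
        have heq : ((a :: rest).take (j+1)).sum + k - (List.replicate a b).length
            = (rest.take j).sum + k := by simp [harith]; omega
        simp_rw [heq]
        rw [ih rest (!b) hj' hk' hlen]
        cases b <;> rcases Nat.even_or_odd j with he|ho <;>
          simp_all [Nat.even_iff, Nat.odd_iff]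
      rw [hstep]
      rcases Nat.even_or_odd j with he | ho
      · have h1 : j % 2 = 0 := Nat.even_iff.mp he
        have h2 : (j+1) % 2 = 1 := by omega
        simp [h1, h2]
      · have h1 : j % 2 = 1 := Nat.odd_iff.mp ho
        have h2 : (j+1) % 2 = 0 := by omega
        simp [h1, h2]

theorem getElem_idx_congr {α : Type*} (L : List α) {i j : ℕ} (h : i = j)
    (hi : i < L.length) (hj : j < L.length) : L[i]'hi = L[j]'hj := by subst h; rfl

theorem dist_le_twin {V : Type*} (G : SimpleGraph V) {u v w : V}
    (h : ∀ x, G.Adj u x → G.Adj v x) (hr : G.Reachable u w) (hw : u ≠ w) :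
    G.dist v w ≤ G.dist u w := by
  obtain ⟨p, hp⟩ := hr.exists_walk_length_eq_dist
  cases p with
  | nil => exact absurd rfl hw
  | cons ha q =>
    calc G.dist v w ≤ (SimpleGraph.Walk.cons (h _ ha) q).length := SimpleGraph.dist_le _
    _ = G.dist u w := by rw [← hp]; simp

/-- For a connected threshold graph `G = (0^{a_1} 1^{a_2} ⋯ 0^{a_{2m-1}} 1^{a_{2m}})`,
the multiplicity of -2 as an eigenvalue of the distance matrix is at least
`∑ (a_{2i-1} - 1)` over the odd-indexed blocks. -/
theorem mult_neg_two_ge (m : ℕ) (hm : 0 < m) (a : ℕ → ℕ)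
    (ha : ∀ i, 1 ≤ i → i ≤ 2 * m → 0 < a i)
    (c : List Bool) (hc : c = blockSeq ((List.range (2 * m)).map fun i => a (i + 1)) false) :
    ∑ i ∈ Finset.range m, (a (2 * i + 1) - 1) ≤
      Polynomial.rootMultiplicity (-2 : ℝ)
        (Matrix.charpoly (distMatrix (thresholdGraph c))) := by
  classical
  set l : List ℕ := (List.range (2 * m)).map fun i => a (i + 1) with hl
  subst hc
  set c : List Bool := blockSeq l false with hc
  set N := c.length with hN0
  set S : ℕ → ℕ := fun j => ∑ k ∈ Finset.range j, a (k + 1) with hS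
  have hsum_eq : ∀ j, ((List.range j).map fun i => a (i + 1)).sum = S j := by
    intro j
    rw [hS]
    induction j with
    | zero => simp
    | succ j ih => simp only [List.range_succ, List.map_append, List.sum_append,
        List.map_cons, List.sum_cons, List.map_nil, List.sum_nil, Finset.sum_range_succ] at ih ⊢
                   omega
  have hlenN : N = S (2 * m) := by
    rw [hN0, hc, blockSeq_length, hl, hsum_eq]
  have hStep : ∀ j, S (j + 1) = S j + a (j + 1) := by
    intro j; rw [hS]; exact Finset.sum_range_succ _ j
  have hMono : ∀ {j j'}, j ≤ j' → S j ≤ S j' := by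
    intro j j' hjj
    exact Finset.sum_le_sum_of_subset (Finset.range_subset_range.mpr hjj)
  have ha2m : 0 < a (2 * m) := ha (2 * m) (by omega) le_rfl
  have hNpos : 0 < N := by
    have h1 : S (2 * m - 1) + a (2 * m) = S (2 * m) := by
      have := hStep (2 * m - 1)
      have h2 : 2 * m - 1 + 1 = 2 * m := by omega
      rw [h2] at this; omega
    omega
  -- get lemma specialized
  have hget : ∀ j k (hj : j < 2 * m) (hk : k < a (j + 1)) (h : S j + k < N),
      c.get ⟨S j + k, h⟩ = if j % 2 = 0 then false else true := by
    intro j k hj hk h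
    have hjl : j < l.length := by simp [hl]; omega
    have hlj : l[j]'hjl = a (j + 1) := by simp [hl]
    have htake : (l.take j).sum = S j := by
      rw [hl, ← List.map_take, List.take_range, min_eq_left (by omega), hsum_eq]
    have hlen2 : (l.take j).sum + k < (blockSeq l false).length := by
      rw [htake, blockSeq_length]
      have : l.sum = S (2 * m) := by rw [hl, hsum_eq]
      rw [this]; omega
    have key := blockSeq_getElem l false j k hjl (by omega) hlen2
    rw [List.get_eq_getElem]
    have hidx : (S j + k) = (l.take j).sum + k := by omega
    rw [getElem_idx_congr c hidx h hlen2, key]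
    cases Nat.even_or_odd j with
    | inl he => simp [Nat.even_iff.mp he]
    | inr ho => simp [Nat.odd_iff.mp ho]
  set G := thresholdGraph c with hG
  -- the last vertex
  have hlast_lt : N - 1 < N := by omega
  set last : Fin N := ⟨N - 1, hlast_lt⟩ with hlast
  have hlast_true : c.get last = true := by
    have h1 : 2 * m - 1 < 2 * m := by omega
    have h2 : a (2 * m) - 1 < a (2 * m - 1 + 1) := by
      have : 2 * m - 1 + 1 = 2 * m := by omega
      rw [this]; omega
    have hSN : S (2 * m - 1) + a (2 * m) = N := by
      have := hStep (2 * m - 1)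
      have h3 : 2 * m - 1 + 1 = 2 * m := by omega
      rw [h3] at this; omega
    have h4 : S (2 * m - 1) + (a (2 * m) - 1) < N := by omega
    have := hget (2 * m - 1) (a (2 * m) - 1) h1 h2 h4
    have h5 : (2 * m - 1) % 2 = 1 := by omega
    rw [h5] at this
    simp at this
    have h6 : last = ⟨S (2 * m - 1) + (a (2 * m) - 1), h4⟩ := by
      apply Fin.ext; simp [hlast]; omega
    rw [h6, List.get_eq_getElem]
    exact this
  have hadj_last : ∀ x : Fin N, x ≠ last → G.Adj x last := by
    intro x hx
    refine ⟨hx, ?_⟩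
    have hxle : x ≤ last := by
      rw [Fin.le_def]; simp [hlast]; omega
    rw [max_eq_right hxle]
    exact hlast_true
  have hreach_last : ∀ x : Fin N, G.Reachable x last := by
    intro x
    by_cases hx : x = last
    · rw [hx]
    · exact (hadj_last x hx).reachable
  have hreach : ∀ x y : Fin N, G.Reachable x y :=
    fun x y => (hreach_last x).trans (hreach_last y).symm
  have hAdj : ∀ p q : Fin N, G.Adj p q ↔ (p ≠ q ∧ c.get (max p q) = true) :=
    fun p q => Iff.rfl
  -- adjacency is the same for two vertices of a false interval
  have hadj_iff : ∀ (u v x : Fin N), (∀ y : Fin N, u ≤ y → y ≤ v → c.get y = false) →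
      u ≤ v → (G.Adj u x ↔ G.Adj v x) := by
    intro u v x hint huv
    by_cases hx : v < x
    · have hux : u < x := lt_of_le_of_lt huv hx
      rw [hAdj, hAdj]
      constructor
      · rintro ⟨-, hmax⟩
        rw [max_eq_right (le_of_lt hux)] at hmax
        exact ⟨ne_of_lt hx, by rw [max_eq_right (le_of_lt hx)]; exact hmax⟩
      · rintro ⟨-, hmax⟩
        rw [max_eq_right (le_of_lt hx)] at hmax
        exact ⟨ne_of_lt hux, by rw [max_eq_right (le_of_lt hux)]; exact hmax⟩
    · push_neg at hx
      rw [hAdj, hAdj]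
      constructor
      · rintro ⟨hne, hmax⟩
        exfalso
        rw [hint (max u x) (le_max_left _ _) (max_le huv hx)] at hmax
        simp at hmax
      · rintro ⟨hne, hmax⟩
        exfalso
        rw [hint (max v x) (le_trans huv (le_max_left _ _)) (max_le le_rfl hx)] at hmax
        simp at hmax
  -- distances from a third vertex to two vertices of a false interval agree
  have hdist_eq : ∀ (u v : Fin N), (∀ y : Fin N, u ≤ y → y ≤ v → c.get y = false) → u ≤ v →
      ∀ w : Fin N, w ≠ u → w ≠ v → G.dist w u = G.dist w v := by
    intro u v hint huv w hwu hwv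
    have hiff := fun x => hadj_iff u v x hint huv
    have h1 : G.dist v w ≤ G.dist u w :=
      dist_le_twin G (fun x hx => (hiff x).mp hx) (hreach u w) hwu.symm
    have h2 : G.dist u w ≤ G.dist v w :=
      dist_le_twin G (fun x hx => (hiff x).mpr hx) (hreach v w) hwv.symm
    rw [SimpleGraph.dist_comm, le_antisymm h2 h1, SimpleGraph.dist_comm]
  -- distance two for nonadjacent distinct vertices away from last
  have hdist2 : ∀ (u v : Fin N), u ≠ v → u ≠ last → v ≠ last → ¬ G.Adj u v →
      G.dist u v = 2 := by
    intro u v huv hu hv hnadj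
    have hle : G.dist u v ≤ 2 := by
      have hp := SimpleGraph.dist_le
        (SimpleGraph.Walk.cons (hadj_last u hu) (SimpleGraph.Walk.cons
          ((hadj_last v hv).symm) SimpleGraph.Walk.nil))
      simpa using hp
    have h0 : 0 < G.dist u v := (hreach u v).pos_dist_of_ne huv
    have h1 : G.dist u v ≠ 1 := fun h => hnadj (SimpleGraph.dist_eq_one_iff_adj.mp h)
    omega
  -- block positivity and bounds
  have hapos : ∀ i : ℕ, i < m → 0 < a (2 * i + 1) := fun i hi => ha _ (by omega) (by omega)
  have hposlt : ∀ (i k : ℕ), i < m → k < a (2 * i + 1) → S (2 * i) + k < N - 1 := by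
    intro i k hi hk
    have h1 := hStep (2 * i)
    have h2 : S (2 * i + 1) ≤ S (2 * m - 1) := hMono (by omega)
    have h3 : S (2 * m - 1) + a (2 * m) = S (2 * m) := by
      have h := hStep (2 * m - 1)
      have he : 2 * m - 1 + 1 = 2 * m := by omega
      rw [he] at h; omega
    omega
  have hfalse : ∀ (i k : ℕ), i < m → k < a (2 * i + 1) → ∀ (h : S (2 * i) + k < N),
      c.get ⟨S (2 * i) + k, h⟩ = false := by
    intro i k hi hk h
    have := hget (2 * i) k (by omega) hk h
    rw [this]
    simp [Nat.mul_mod_right]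
  have horder : ∀ (i i' k : ℕ), k < a (2 * i + 1) → i < i' → i' ≤ m →
      S (2 * i) + k < S (2 * i') := by
    intro i i' k hk hii hi'm
    have h1 := hStep (2 * i)
    have h2 : S (2 * i + 1) ≤ S (2 * i') := hMono (by omega)
    omega
  -- the family of vertices
  set ι : Type := (i : Fin m) × Fin (a (2 * (i : ℕ) + 1) - 1) with hι
  have hvbound : ∀ s : ι, S (2 * (s.1 : ℕ)) + ((s.2 : ℕ) + 1) < N - 1 := by
    intro s
    exact hposlt s.1 ((s.2 : ℕ) + 1) s.1.2 (by have := s.2.2; omega)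
  have hbbound : ∀ i : Fin m, S (2 * (i : ℕ)) < N - 1 := by
    intro i
    have := hposlt i 0 i.2 (hapos i i.2)
    omega
  set vert : ι → Fin N := fun s => ⟨S (2 * (s.1 : ℕ)) + (s.2 : ℕ) + 1,
    by have := hvbound s; omega⟩ with hvert
  set base : Fin m → Fin N := fun i => ⟨S (2 * (i : ℕ)), by have := hbbound i; omega⟩ with hbase
  have hvert_ne_base : ∀ (s : ι) (j : Fin m), vert s ≠ base j := by
    intro s j h
    have hval : S (2 * (s.1 : ℕ)) + (s.2 : ℕ) + 1 = S (2 * (j : ℕ)) := congrArg Fin.val h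
    rcases Nat.lt_or_ge (j : ℕ) ((s.1 : ℕ) + 1) with hj | hj
    · have : S (2 * (j : ℕ)) ≤ S (2 * (s.1 : ℕ)) := hMono (by omega)
      omega
    · have := horder (s.1 : ℕ) (j : ℕ) ((s.2 : ℕ) + 1) (by have := s.2.2; omega)
        (by omega) (by have := j.2; omega)
      omega
  have hvert_inj : Function.Injective vert := by
    intro s t h
    have hval : S (2 * (s.1 : ℕ)) + (s.2 : ℕ) + 1 = S (2 * (t.1 : ℕ)) + (t.2 : ℕ) + 1 :=
      congrArg Fin.val h
    have hs2 := s.2.2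
    have ht2 := t.2.2
    have h11 : (s.1 : ℕ) = (t.1 : ℕ) := by
      by_contra hne
      rcases Nat.lt_or_ge (s.1 : ℕ) (t.1 : ℕ) with hlt | hge
      · have := horder (s.1 : ℕ) (t.1 : ℕ) ((s.2 : ℕ) + 1) (by omega) hlt
          (by have := t.1.2; omega)
        omega
      · have hlt' : (t.1 : ℕ) < (s.1 : ℕ) := by omega
        have := horder (t.1 : ℕ) (s.1 : ℕ) ((t.2 : ℕ) + 1) (by omega) hlt'
          (by have := s.1.2; omega)
        omega
    obtain ⟨i, k⟩ := s
    obtain ⟨i', k'⟩ := t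
    simp only at h11 hval
    have hi : i = i' := Fin.ext h11
    subst hi
    have hk : k = k' := Fin.ext (by omega)
    rw [hk]
  -- interval of a block is all false
  have hint : ∀ (s : ι) (y : Fin N), base s.1 ≤ y → y ≤ vert s → c.get y = false := by
    intro s y h1 h2
    have hy1 : S (2 * (s.1 : ℕ)) ≤ (y : ℕ) := h1
    have hy2 : (y : ℕ) ≤ S (2 * (s.1 : ℕ)) + (s.2 : ℕ) + 1 := h2
    have hs2 := s.2.2
    have ht : (y : ℕ) - S (2 * (s.1 : ℕ)) < a (2 * (s.1 : ℕ) + 1) := by omega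
    have hN' : S (2 * (s.1 : ℕ)) + ((y : ℕ) - S (2 * (s.1 : ℕ))) < N := by
      have := y.2; omega
    have hf := hfalse (s.1 : ℕ) ((y : ℕ) - S (2 * (s.1 : ℕ))) s.1.2 ht hN'
    have hy : y = ⟨S (2 * (s.1 : ℕ)) + ((y : ℕ) - S (2 * (s.1 : ℕ))), hN'⟩ :=
      Fin.ext (by simp; omega)
    rw [hy]; exact hf
  have hble : ∀ s : ι, base s.1 ≤ vert s := by
    intro s
    show S (2 * (s.1 : ℕ)) ≤ S (2 * (s.1 : ℕ)) + (s.2 : ℕ) + 1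
    omega
  have hbne : ∀ s : ι, base s.1 ≠ vert s := by
    intro s h
    have := congrArg Fin.val h
    simp only [hvert, hbase] at this
    omega
  have hb_ne_last : ∀ i : Fin m, base i ≠ last := by
    intro i h
    have := congrArg Fin.val h
    have h2 := hbbound i
    simp only [hbase, hlast] at this
    omega
  have hv_ne_last : ∀ s : ι, vert s ≠ last := by
    intro s h
    have := congrArg Fin.val h
    have h2 := hvbound s
    simp only [hvert, hlast] at this
    omega
  have hnadj : ∀ s : ι, ¬ G.Adj (base s.1) (vert s) := by
    intro s hadj
    have h2 := ((hAdj _ _).mp hadj).2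
    rw [max_eq_right (hble s)] at h2
    rw [hint s (vert s) (hble s) le_rfl] at h2
    simp at h2
  have hd2 : ∀ s : ι, G.dist (base s.1) (vert s) = 2 := fun s =>
    hdist2 (base s.1) (vert s) (hbne s) (hb_ne_last s.1) (hv_ne_last s) (hnadj s)
  -- the eigenvector family
  set fam : ι → (Fin N → ℝ) := fun s x =>
    (if x = vert s then (1 : ℝ) else 0) - (if x = base s.1 then 1 else 0) with hfam
  have hev : ∀ s : ι, (distMatrix G).mulVec (fam s) = (-2 : ℝ) • fam s := by
    intro s
    funext x
    have hDxy : ∀ p q : Fin N, distMatrix G p q = (G.dist p q : ℝ) := fun p q => rfl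
    have hsum : (distMatrix G).mulVec (fam s) x
        = distMatrix G x (vert s) - distMatrix G x (base s.1) := by
      simp only [Matrix.mulVec, dotProduct, hfam, mul_sub, mul_ite, mul_one, mul_zero]
      rw [Finset.sum_sub_distrib]
      congr 1 <;> rw [Finset.sum_ite_eq' Finset.univ] <;> simp
    rw [hsum]
    by_cases hxv : x = vert s
    · subst hxv
      rw [hDxy, hDxy, SimpleGraph.dist_self, SimpleGraph.dist_comm, hd2 s]
      simp only [Pi.smul_apply, hfam, smul_eq_mul]
      rw [if_neg (show ¬ vert s = base s.fst from fun h => hbne s h.symm)]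
      push_cast
      norm_num
    · by_cases hxb : x = base s.1
      · subst hxb
        rw [hDxy, hDxy, SimpleGraph.dist_self, hd2 s]
        simp only [Pi.smul_apply, hfam, smul_eq_mul]
        rw [if_neg (show ¬ base s.fst = vert s from hbne s)]
        push_cast
        norm_num
      · rw [hDxy, hDxy,
          hdist_eq (base s.1) (vert s) (hint s) (hble s) x hxb hxv]
        simp only [Pi.smul_apply, hfam, smul_eq_mul]
        rw [if_neg hxv, if_neg hxb]
        push_cast
        norm_num
  -- linear independence
  have hli : LinearIndependent ℝ fam := by
    rw [Fintype.linearIndependent_iff]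
    intro g hg s₀
    have h0 := congrFun hg (vert s₀)
    simp only [Finset.sum_apply, Pi.smul_apply, smul_eq_mul, hfam, Pi.zero_apply] at h0
    have h1 : ∀ s : ι, (if vert s₀ = base s.1 then (1 : ℝ) else 0) = 0 := by
      intro s; exact if_neg (fun h => hvert_ne_base s₀ s.1 h)
    simp only [h1, sub_zero] at h0
    have h2 : ∑ s : ι, g s * (if vert s₀ = vert s then (1 : ℝ) else 0) = g s₀ := by
      rw [Finset.sum_eq_single s₀]
      · simp
      · intro s _ hs
        rw [if_neg (fun h => hs (hvert_inj h.symm))]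
        ring
      · intro h; exact absurd (Finset.mem_univ s₀) h
    rw [h2] at h0
    exact h0
  -- conclude
  have hcard : Fintype.card ι = ∑ i ∈ Finset.range m, (a (2 * i + 1) - 1) := by
    show Fintype.card ((i : Fin m) × Fin (a (2 * (i : ℕ) + 1) - 1)) = _
    rw [Fintype.card_sigma]
    simp only [Fintype.card_fin]
    exact Fin.sum_univ_eq_sum_range (fun i => a (2 * i + 1) - 1) m
  calc ∑ i ∈ Finset.range m, (a (2 * i + 1) - 1) = Fintype.card ι := hcard.symm
    _ ≤ _ := card_le_rootMultiplicity (distMatrix G) (-2) fam hli hev
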